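/- For each n ≥ 1, the coefficient generating function identity holds: the sum over partitions π = (λ_1 > λ_2 > ... > λ_ν) into distinct parts of q^{|π|} · ∏_{i=1}^{ν}(2λ_i - 2λ_{i+1} - 1) (with the convention λ_{ν+1} = 0) equals ∑_{n≥0} q^{n(n+1)/2} (-q;q)_n / ((q;q)_n)^2, as formal power series in q. -/

import Mathlib

open scoped Classical

def wtTwo : List ℕ → ℕ
  | [] => 1
  | [x] => 2 * x - 1
  | x :: y :: t => (2 * x - 2 * y - 1) * wtTwo (y :: t)

/-- Build the strictly decreasing list from the top-down gap list. -/
def build : List ℕ → List ℕ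
  | [] => []
  | x :: t => (x + 1 + (build t).headI) :: build t

/-- Gaps of a strictly decreasing list. -/
def gaps : List ℕ → List ℕ
  | [] => []
  | x :: t => (x - 1 - t.headI) :: gaps t

/-- Weighted sum: position j (1-indexed from front) gets weight j. -/
def Wt : List ℕ → ℕ
  | [] => 0
  | x :: t => x + t.sum + Wt t

lemma length_build (h : List ℕ) : (build h).length = h.length := by
  induction h with
  | nil => rfl
  | cons x t ih => simp [build, ih]

lemma length_gaps (L : List ℕ) : (gaps L).length = L.length := by
  induction L with
  | nil => rfl
  | cons x t ih => simp [gaps, ih]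

lemma headI_build (h : List ℕ) : (build h).headI = h.length + h.sum := by
  induction h with
  | nil => rfl
  | cons x t ih => simp [build, ih]; omega

lemma sum_build (h : List ℕ) : (build h).sum = h.length * (h.length + 1) / 2 + Wt h := by
  induction h with
  | nil => rfl
  | cons x t ih =>
    have h2 : 2 ∣ t.length * (t.length + 1) := (Nat.even_mul_succ_self t.length).two_dvd
    obtain ⟨c, hc⟩ := h2
    have h3 : (t.length + 1) * (t.length + 2) / 2 = t.length * (t.length + 1) / 2 + (t.length + 1) := by
      have : (t.length + 1) * (t.length + 2) = t.length * (t.length + 1) + 2 * (t.length + 1) := by ring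
      rw [this, hc]; omega
    simp only [build, List.sum_cons, ih, headI_build, Wt, List.length_cons]
    rw [h3]; omega

lemma sorted_build (h : List ℕ) : (build h).Pairwise (· > ·) := by
  induction h with
  | nil => simp [build]
  | cons x t ih =>
    simp only [build, List.pairwise_cons]
    refine ⟨fun b hb => ?_, ih⟩
    have : b ≤ (build t).headI := by
      cases hbt : build t with
      | nil => simp [hbt] at hb
      | cons a s =>
        rw [hbt] at hb
        rcases List.mem_cons.mp hb with rfl | hb'
        · simp
        · simp only [List.headI]
          have ih2 := ih
          rw [hbt] at ih2
          exact le_of_lt (((List.pairwise_cons.mp ih2).1) b hb')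
    omega

lemma pos_build (h : List ℕ) : ∀ x ∈ build h, 0 < x := by
  induction h with
  | nil => simp [build]
  | cons x t ih =>
    intro b hb
    rcases List.mem_cons.mp hb with rfl | hb'
    · omega
    · exact ih b hb'

lemma gaps_build (h : List ℕ) : gaps (build h) = h := by
  induction h with
  | nil => rfl
  | cons x t ih =>
    simp only [build, gaps, ih]
    congr 1
    omega

lemma build_gaps (L : List ℕ) (hs : L.Pairwise (· > ·)) (hp : ∀ x ∈ L, 0 < x) :
    build (gaps L) = L := by
  induction L with
  | nil => rfl
  | cons x t ih =>
    have hst := List.pairwise_cons.mp hs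
    have ih' := ih hst.2 (fun y hy => hp y (List.mem_cons_of_mem _ hy))
    simp only [gaps, build, ih']
    congr 1
    have hx : 0 < x := hp x List.mem_cons_self
    cases t with
    | nil => simp; omega
    | cons a s =>
      have : a < x := hst.1 a List.mem_cons_self
      simp only [List.headI]
      omega

lemma wtTwo_build (h : List ℕ) : wtTwo (build h) = (h.map (fun x => 2 * x + 1)).prod := by
  induction h with
  | nil => rfl
  | cons x t ih =>
    cases t with
    | nil => simp [build, wtTwo]; omega
    | cons y s =>
      have hb : build (y :: s) = (y + 1 + (build s).headI) :: build s := rfl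
      simp only [build, hb, wtTwo, List.map_cons, List.prod_cons, List.headI] at ih ⊢
      rw [← ih]
      congr 1
      omega

lemma sum_getD (t : List ℕ) : ∑ i ∈ Finset.range t.length, t.getD i 0 = t.sum := by
  induction t with
  | nil => rfl
  | cons x s ih =>
    rw [List.length_cons, Finset.sum_range_succ']
    simp only [List.getD_cons_succ, List.getD_cons_zero, ih, List.sum_cons]
    omega

lemma Wt_eq (h : List ℕ) : Wt h = ∑ i ∈ Finset.range h.length, (i + 1) * h.getD i 0 := by
  induction h with
  | nil => rfl
  | cons x t ih =>
    rw [List.length_cons, Finset.sum_range_succ']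
    simp only [List.getD_cons_succ, List.getD_cons_zero, Wt, ih, one_mul]
    have : ∑ i ∈ Finset.range t.length, (i + 1 + 1) * t.getD i 0
        = ∑ i ∈ Finset.range t.length, ((i + 1) * t.getD i 0 + t.getD i 0) := by
      apply Finset.sum_congr rfl; intro i _; ring
    rw [this, Finset.sum_add_distrib, sum_getD]
    omega

lemma prod_getD (h : List ℕ) (f : ℕ → ℚ) :
    ∏ i ∈ Finset.range h.length, f (h.getD i 0) = (h.map (fun x => f x)).prod := by
  induction h with
  | nil => rfl
  | cons x t ih =>
    rw [List.length_cons, Finset.prod_range_succ']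
    simp only [List.getD_cons_succ, List.getD_cons_zero, List.map_cons, List.prod_cons, ih]
    ring


open PowerSeries

noncomputable def gk (k : ℕ) : PowerSeries ℚ :=
  PowerSeries.mk fun d => if k ∣ d then ((2 * (d / k) + 1 : ℕ) : ℚ) else 0

noncomputable def gk2 (k : ℕ) : PowerSeries ℚ :=
  PowerSeries.mk fun d => if k ∣ d then (if d = 0 then 1 else 2 : ℚ) else 0

lemma coeff_one_sub_X_pow_mul (k : ℕ) (f : PowerSeries ℚ) (n : ℕ) :
    coeff n ((1 - X ^ k) * f)
      = coeff n f - (if k ≤ n then coeff (n - k) f else 0) := by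
  have : (1 - X ^ k) * f = f - f * X ^ k := by ring
  rw [this, map_sub, coeff_mul_X_pow']

lemma step1 (k : ℕ) (hk : 0 < k) : (1 - X ^ k) * gk k = gk2 k := by
  ext n
  rw [coeff_one_sub_X_pow_mul]
  simp only [gk, gk2, coeff_mk]
  by_cases hd : k ∣ n
  · obtain ⟨q, rfl⟩ := hd
    rcases Nat.eq_zero_or_pos q with rfl | hq
    · simp [hk, Nat.not_le.mpr hk]
    · have hle : k ≤ k * q := Nat.le_mul_of_pos_right k hq
      have hdvd : k ∣ k * q - k := ⟨q - 1, by rw [Nat.mul_sub_one]⟩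
      have h1 : k * q / k = q := Nat.mul_div_cancel_left q hk
      have h2 : (k * q - k) / k = q - 1 := by
        rw [show k * q - k = k * (q - 1) from by rw [Nat.mul_sub_one]]
        exact Nat.mul_div_cancel_left _ hk
      have hne : k * q ≠ 0 := by positivity
      simp only [dvd_mul_right, if_pos, hle, if_pos, hdvd, h1, h2, hne, if_false,
        if_true, ite_true]
      push_cast [hq]
      ring
  · have h3 : ∀ (hkn : k ≤ n), ¬ (k ∣ n - k) := by
      intro hkn hcon
      exact hd (by have := Nat.dvd_add hcon (dvd_refl k); rwa [Nat.sub_add_cancel hkn] at this)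
    simp only [hd, if_false]
    by_cases hkn : k ≤ n
    · simp [hkn, h3 hkn]
    · simp [hkn]

lemma step2 (k : ℕ) (hk : 0 < k) : (1 - X ^ k) * gk2 k = 1 + X ^ k := by
  ext n
  rw [coeff_one_sub_X_pow_mul]
  simp only [gk2, coeff_mk, map_add, coeff_one, coeff_X_pow]
  by_cases hd : k ∣ n
  · obtain ⟨q, rfl⟩ := hd
    rcases Nat.eq_zero_or_pos q with rfl | hq
    · simp [Nat.not_le.mpr hk]
      omega
    · have hle : k ≤ k * q := Nat.le_mul_of_pos_right k hq
      have hdvd : k ∣ k * q - k := ⟨q - 1, by rw [Nat.mul_sub_one]⟩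
      have hne : k * q ≠ 0 := by positivity
      rcases eq_or_lt_of_le (Nat.succ_le_of_lt hq) with hq1 | hq2
      · obtain rfl : q = 1 := by omega
        rw [mul_one] at *
        simp [hk.ne', hdvd, Nat.not_le.mpr hk]
        norm_num
      · have hne2 : k * q - k ≠ 0 := by
          have : k * 2 ≤ k * q := Nat.mul_le_mul_left k hq2
          omega
        have hne3 : k * q ≠ k := by omega
        simp [hne, hle, hdvd, hne2, hne3]
  · have h3 : ∀ (hkn : k ≤ n), ¬ (k ∣ n - k) := by
      intro hkn hcon
      exact hd (by have := Nat.dvd_add hcon (dvd_refl k); rwa [Nat.sub_add_cancel hkn] at this)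
    have hn0 : n ≠ 0 := by rintro rfl; exact hd (dvd_zero k)
    have hnk : n ≠ k := by rintro rfl; exact hd dvd_rfl
    simp only [hd, if_false, hn0, hnk]
    by_cases hkn : k ≤ n
    · simp [hkn, h3 hkn, hn0, hnk]
    · simp [hkn, hn0, hnk]

lemma step3 (k : ℕ) (hk : 0 < k) : (1 - X ^ k) ^ 2 * gk k = 1 + X ^ k := by
  rw [sq, mul_assoc, step1 k hk, step2 k hk]

lemma prod_eq (n : ℕ) :
    (∏ i ∈ Finset.range n, (1 + (X : PowerSeries ℚ) ^ (i + 1)))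
        * ((∏ i ∈ Finset.range n, (1 - (X : PowerSeries ℚ) ^ (i + 1)))⁻¹) ^ 2
      = ∏ i ∈ Finset.range n, gk (i + 1) := by
  set Q := ∏ i ∈ Finset.range n, (1 - (X : PowerSeries ℚ) ^ (i + 1)) with hQ
  have hQ0 : constantCoeff Q ≠ 0 := by
    rw [hQ, map_prod]
    have : ∀ i ∈ Finset.range n, constantCoeff (1 - (X : PowerSeries ℚ) ^ (i + 1)) = 1 := by
      intro i _
      simp [pow_succ, map_sub]
    rw [Finset.prod_congr rfl this]
    simp
  have key : (∏ i ∈ Finset.range n, gk (i + 1)) * Q ^ 2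
      = ∏ i ∈ Finset.range n, (1 + (X : PowerSeries ℚ) ^ (i + 1)) := by
    rw [hQ, ← Finset.prod_pow, ← Finset.prod_mul_distrib]
    apply Finset.prod_congr rfl
    intro i _
    rw [mul_comm]
    exact step3 (i + 1) (Nat.succ_pos i)
  rw [← key]
  have hinv : Q * Q⁻¹ = 1 := PowerSeries.mul_inv_cancel Q hQ0
  calc (∏ i ∈ Finset.range n, gk (i + 1)) * Q ^ 2 * (Q⁻¹) ^ 2
      = (∏ i ∈ Finset.range n, gk (i + 1)) * (Q * Q⁻¹) ^ 2 := by ring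
    _ = ∏ i ∈ Finset.range n, gk (i + 1) := by rw [hinv]; ring


open PowerSeries Finset

lemma map_range_getD (t : List ℕ) :
    (List.range t.length).map (fun i => t.getD i 0) = t := by
  apply List.ext_getElem
  · simp
  · intro i h1 h2
    simp only [List.getElem_map, List.getElem_range, List.getD_eq_getElem?_getD,
      List.getElem?_eq_getElem h2, Option.getD_some]

lemma sort_coe (L : List ℕ) (h : L.Pairwise (· ≥ ·)) :
    Multiset.sort (↑L : Multiset ℕ) (· ≥ ·) = L := by
  apply List.Perm.eq_of_pairwise' (Multiset.pairwise_sort _ _) h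
  exact Multiset.coe_eq_coe.mp (by rw [Multiset.sort_eq])

lemma sortL_sorted_gt {m : ℕ} (π : Nat.Partition m) (hnd : π.parts.Nodup) :
    (π.parts.sort (· ≥ ·)).Pairwise (· > ·) := by
  have h1 : (π.parts.sort (· ≥ ·)).Pairwise (· ≥ ·) := Multiset.pairwise_sort _ _
  have h2 : (π.parts.sort (· ≥ ·)).Nodup := by
    rw [← Multiset.coe_nodup, Multiset.sort_eq]
    exact hnd
  exact List.Pairwise.imp₂ (fun a b hab hne => lt_of_le_of_ne hab (Ne.symm hne)) h1 h2

lemma sortL_pos {m : ℕ} (π : Nat.Partition m) :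
    ∀ x ∈ π.parts.sort (· ≥ ·), 0 < x := by
  intro x hx
  exact π.parts_pos (by rw [← Multiset.sort_eq π.parts (· ≥ ·)]; exact_mod_cast hx)

lemma sortL_sum {m : ℕ} (π : Nat.Partition m) : (π.parts.sort (· ≥ ·)).sum = m := by
  rw [← Multiset.sum_coe, Multiset.sort_eq]
  exact π.parts_sum

lemma n_le_T (n : ℕ) : n ≤ n * (n + 1) / 2 := by
  rcases Nat.eq_zero_or_pos n with rfl | h
  · simp
  · rw [Nat.le_div_iff_mul_le (by norm_num)]
    exact Nat.mul_le_mul_left n (by omega)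

/-- The list `build (map (fun i => l i / (i+1)) (range n))`. -/
noncomputable def bwdList (n : ℕ) (l : ℕ →₀ ℕ) : List ℕ :=
  build ((List.range n).map fun i => l i / (i + 1))

lemma bwdList_getD (n : ℕ) (l : ℕ →₀ ℕ) (i : ℕ) (hi : i < n) :
    ((List.range n).map fun i => l i / (i + 1)).getD i 0 = l i / (i + 1) := by
  rw [List.getD_eq_getElem?_getD]
  have h2 : i < ((List.range n).map fun i => l i / (i + 1)).length := by simpa using hi
  rw [List.getElem?_eq_getElem h2]
  simp

lemma bwdList_sum (m n : ℕ) (l : ℕ →₀ ℕ) (hT : n * (n + 1) / 2 ≤ m)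
    (hs : (Finset.range n).sum l = m - n * (n + 1) / 2)
    (hdvd : ∀ i < n, (i + 1) ∣ l i) :
    (bwdList n l).sum = m := by
  have hlen : ((List.range n).map fun i => l i / (i + 1)).length = n := by simp
  rw [bwdList, sum_build, hlen, Wt_eq, hlen]
  have : ∀ i ∈ Finset.range n,
      (i + 1) * (((List.range n).map fun i => l i / (i + 1)).getD i 0) = l i := by
    intro i hi
    rw [bwdList_getD n l i (Finset.mem_range.mp hi)]
    exact Nat.mul_div_cancel' (hdvd i (Finset.mem_range.mp hi))
  rw [Finset.sum_congr rfl this, hs]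
  omega

theorem stmt_16 :
    ∀ m : ℕ,
      (∑ π ∈ Finset.univ.filter (fun π : Nat.Partition m => π.parts.Nodup),
          (wtTwo (π.parts.sort (· ≥ ·)) : ℚ))
        = PowerSeries.coeff (R := ℚ) m
            (∑ n ∈ Finset.range (m + 1),
              (PowerSeries.X : PowerSeries ℚ) ^ (n * (n + 1) / 2)
                * (∏ i ∈ Finset.range n, (1 + (PowerSeries.X : PowerSeries ℚ) ^ (i + 1)))
                * ((∏ i ∈ Finset.range n, (1 - (PowerSeries.X : PowerSeries ℚ) ^ (i + 1)))⁻¹) ^ 2) := by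
  intro m
  rw [map_sum]
  have hterm : ∀ n ∈ Finset.range (m + 1),
      PowerSeries.coeff m
        ((PowerSeries.X : PowerSeries ℚ) ^ (n * (n + 1) / 2)
          * (∏ i ∈ Finset.range n, (1 + (PowerSeries.X : PowerSeries ℚ) ^ (i + 1)))
          * ((∏ i ∈ Finset.range n, (1 - (PowerSeries.X : PowerSeries ℚ) ^ (i + 1)))⁻¹) ^ 2)
      = if n * (n + 1) / 2 ≤ m then
          (∑ l ∈ Finset.finsuppAntidiag (Finset.range n) (m - n * (n + 1) / 2),
            ∏ i ∈ Finset.range n, PowerSeries.coeff (l i) (gk (i + 1)))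
        else 0 := by
    intro n _
    rw [mul_assoc, prod_eq n, mul_comm, PowerSeries.coeff_mul_X_pow', coeff_prod]
  rw [Finset.sum_congr rfl hterm, ← Finset.sum_filter]
  have hfil : ∀ n ∈ (Finset.range (m + 1)).filter (fun n => n * (n + 1) / 2 ≤ m),
      (∑ l ∈ Finset.finsuppAntidiag (Finset.range n) (m - n * (n + 1) / 2),
          ∏ i ∈ Finset.range n, PowerSeries.coeff (l i) (gk (i + 1)))
        = ∑ l ∈ (Finset.finsuppAntidiag (Finset.range n) (m - n * (n + 1) / 2)).filter
            (fun l => ∀ i ∈ Finset.range n, (i + 1) ∣ l i),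
            ∏ i ∈ Finset.range n, PowerSeries.coeff (l i) (gk (i + 1)) := by
    intro n _
    rw [Finset.sum_filter]
    apply Finset.sum_congr rfl
    intro l _
    by_cases hP : ∀ i ∈ Finset.range n, (i + 1) ∣ l i
    · rw [if_pos hP]
    · rw [if_neg hP]
      push_neg at hP
      obtain ⟨i, hi, hnd⟩ := hP
      apply Finset.prod_eq_zero hi
      simp [gk, coeff_mk, hnd]
  rw [Finset.sum_congr rfl hfil, Finset.sum_sigma']
  refine Finset.sum_bij'
    (fun π hπ => ⟨π.parts.card,
      Finsupp.onFinset (Finset.range π.parts.card)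
        (fun i => (i + 1) * ((gaps (π.parts.sort (· ≥ ·))).getD i 0)) (by
          intro i hi
          rw [Finset.mem_range]
          by_contra hle
          push_neg at hle
          apply hi
          show (i + 1) * ((gaps (π.parts.sort (· ≥ ·))).getD i 0) = 0
          rw [List.getD_eq_default, Nat.mul_zero]
          rw [length_gaps]
          simpa using hle)⟩)
    (fun x hx => ⟨(bwdList x.1 x.2 : Multiset ℕ),
      (fun {i} hi => pos_build _ i (by exact_mod_cast hi)), by
        rw [Multiset.sum_coe]
        simp only [Finset.mem_sigma, Finset.mem_filter, Finset.mem_range,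
          Finset.mem_finsuppAntidiag] at hx
        exact bwdList_sum m x.1 x.2 hx.1.2 hx.2.1.1 hx.2.2⟩)
    ?_ ?_ ?_ ?_ ?_
  · -- forward membership
    intro π hπ
    rw [Finset.mem_filter] at hπ
    have hnd := hπ.2
    set L := π.parts.sort (· ≥ ·) with hL
    have hlenL : L.length = π.parts.card := by rw [hL]; exact Multiset.length_sort _
    have hkey : (build (gaps L)).sum = (gaps L).length * ((gaps L).length + 1) / 2 + Wt (gaps L) :=
      sum_build _
    rw [build_gaps L (sortL_sorted_gt π hnd) (sortL_pos π), sortL_sum π, length_gaps, hlenL]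
      at hkey
    have hTm : π.parts.card * (π.parts.card + 1) / 2 ≤ m := by omega
    simp only [Finset.mem_sigma, Finset.mem_filter, Finset.mem_range, Finset.mem_finsuppAntidiag]
    refine ⟨⟨by have := n_le_T π.parts.card; omega, hTm⟩, ⟨?_, ?_⟩, ?_⟩
    · -- sum over range n
      have : ∑ i ∈ Finset.range π.parts.card, (i + 1) * ((gaps L).getD i 0) = Wt (gaps L) := by
        rw [Wt_eq, length_gaps, hlenL]
      show ∑ i ∈ Finset.range π.parts.card, (i + 1) * ((gaps L).getD i 0) = _
      rw [this]
      omega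
    · exact Finsupp.support_onFinset_subset
    · intro i _
      simp only [Finsupp.onFinset_apply]
      exact Dvd.intro _ rfl
  · -- backward membership
    intro x hx
    simp only [Finset.mem_filter, Finset.mem_univ, true_and]
    change Multiset.Nodup _
    rw [Multiset.coe_nodup]
    exact (sorted_build _).nodup
  · -- left inverse
    intro π hπ
    rw [Finset.mem_filter] at hπ
    have hnd := hπ.2
    apply Nat.Partition.ext
    simp only
    have hlenL : (π.parts.sort (· ≥ ·)).length = π.parts.card := Multiset.length_sort _
    have hmap : ((List.range π.parts.card).map fun i =>
        ((i + 1) * ((gaps (π.parts.sort (· ≥ ·))).getD i 0)) / (i + 1))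
        = gaps (π.parts.sort (· ≥ ·)) := by
      have h1 : ∀ i, ((i + 1) * ((gaps (π.parts.sort (· ≥ ·))).getD i 0)) / (i + 1)
          = (gaps (π.parts.sort (· ≥ ·))).getD i 0 := fun i =>
        Nat.mul_div_cancel_left _ (Nat.succ_pos i)
      calc ((List.range π.parts.card).map fun i =>
              ((i + 1) * ((gaps (π.parts.sort (· ≥ ·))).getD i 0)) / (i + 1))
          = (List.range π.parts.card).map fun i =>
              (gaps (π.parts.sort (· ≥ ·))).getD i 0 := by
            apply List.map_congr_left; intro i _; exact h1 i
        _ = (List.range (gaps (π.parts.sort (· ≥ ·))).length).map fun i =>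
              (gaps (π.parts.sort (· ≥ ·))).getD i 0 := by rw [length_gaps, hlenL]
        _ = gaps (π.parts.sort (· ≥ ·)) := map_range_getD _
    rw [bwdList]
    simp only [Finsupp.onFinset_apply]
    rw [hmap, build_gaps _ (sortL_sorted_gt π hnd) (sortL_pos π), Multiset.sort_eq]
  · -- right inverse
    intro x hx
    simp only [Finset.mem_sigma, Finset.mem_filter, Finset.mem_range,
      Finset.mem_finsuppAntidiag] at hx
    obtain ⟨⟨hnm, hTm⟩, ⟨hsum, hsupp⟩, hdvd⟩ := hx
    obtain ⟨n, l⟩ := x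
    dsimp only at *
    have hLb : (bwdList n l : Multiset ℕ).sort (· ≥ ·) = bwdList n l := by
      apply sort_coe
      exact (sorted_build _).imp le_of_lt
    have hcard : (bwdList n l : Multiset ℕ).card = n := by
      rw [Multiset.coe_card, bwdList, length_build]
      simp
    apply Sigma.ext
    · exact hcard
    · rw [heq_eq_eq]  -- types are the same
      apply Finsupp.ext
      intro i
      simp only [Finsupp.onFinset_apply]
      rw [hLb]
      rw [bwdList, gaps_build]
      by_cases hi : i < n
      · rw [bwdList_getD n l i hi]
        exact Nat.mul_div_cancel' (hdvd i hi)
      · rw [List.getD_eq_default, Nat.mul_zero]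
        · have : l i = 0 := by
            by_contra hne
            have hm := hsupp (Finsupp.mem_support_iff.mpr hne)
            rw [Finset.mem_range] at hm
            omega
          omega
        · simpa using Nat.le_of_not_lt hi
  · -- weights
    intro π hπ
    rw [Finset.mem_filter] at hπ
    have hnd := hπ.2
    set L := π.parts.sort (· ≥ ·) with hL
    have hlenL : L.length = π.parts.card := by rw [hL]; exact Multiset.length_sort _
    have hprod : ∀ i ∈ Finset.range π.parts.card,
        PowerSeries.coeff ((i + 1) * ((gaps L).getD i 0)) (gk (i + 1))
          = ((2 * ((gaps L).getD i 0) + 1 : ℕ) : ℚ) := by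
      intro i _
      rw [gk, coeff_mk, if_pos (Dvd.intro _ rfl), Nat.mul_div_cancel_left _ (Nat.succ_pos i)]
    simp only [Finsupp.onFinset_apply]
    rw [Finset.prod_congr rfl hprod]
    have : ∏ i ∈ Finset.range π.parts.card, ((2 * ((gaps L).getD i 0) + 1 : ℕ) : ℚ)
        = ((gaps L).map fun x => ((2 * x + 1 : ℕ) : ℚ)).prod := by
      rw [← prod_getD (gaps L) (fun x => ((2 * x + 1 : ℕ) : ℚ)), length_gaps, hlenL]
    rw [this]
    have hwt : wtTwo L = ((gaps L).map fun x => 2 * x + 1).prod := by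
      conv_lhs => rw [← build_gaps L (sortL_sorted_gt π hnd) (sortL_pos π)]
      exact wtTwo_build _
    rw [hwt, Nat.cast_list_prod, List.map_map]
    rfl
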